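/- Let C ⊆ ℝⁿ⁻¹ be connected and let Y ⊆ C × ℝ be a set such that the projection p : Y → C is a local homeomorphism with finite fibers, and such that Y is closed in C × ℝ and bounded. Then Y is a finite disjoint union of graphs of continuous functions s₁ < s₂ < ⋯ < s_q : C → ℝ. -/

import Mathlib

open Set Filter Metric Topology Bornology

namespace Stmt11Aux

variable {m : ℕ} {C : Set (Fin m → ℝ)} {Y : Set ((Fin m → ℝ) × ℝ)}



noncomputable def fib (hfib : ∀ x : Fin m → ℝ, {p ∈ Y | p.1 = x}.Finite) (x : Fin m → ℝ) :
    Finset ℝ := (hfib x).toFinset.image Prod.snd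

lemma mem_fib (hfib : ∀ x : Fin m → ℝ, {p ∈ Y | p.1 = x}.Finite) {x : Fin m → ℝ} {t : ℝ} :
    t ∈ fib hfib x ↔ (x, t) ∈ Y := by
  simp only [fib, Finset.mem_image, Set.Finite.mem_toFinset, Set.mem_setOf_eq]
  constructor
  · rintro ⟨p, ⟨hpY, hp1⟩, hp2⟩
    rwa [← hp1, ← hp2, Prod.mk.eta]
  · intro h
    exact ⟨(x, t), ⟨h, rfl⟩, rfl⟩

/-- Claim A: eventually, every fiber point is near a fiber point of `x₀`. -/
lemma claimA (hfib : ∀ x : Fin m → ℝ, {p ∈ Y | p.1 = x}.Finite)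
    (hclosed : IsClosed {p : C × ℝ | ((p.1 : Fin m → ℝ), p.2) ∈ Y})
    (hbdd : Bornology.IsBounded Y)
    {x₀ : Fin m → ℝ} (hx₀ : x₀ ∈ C) {s : ℝ} (hs : 0 < s) :
    ∀ᶠ x in 𝓝[C] x₀, ∀ t' ∈ fib hfib x, ∃ t ∈ fib hfib x₀, |t' - t| < s := by
  by_contra hcon
  rw [Filter.not_eventually] at hcon
  have hseq : ∀ n : ℕ, ∃ x, (x ∈ ball x₀ (1 / (n + 1)) ∧ x ∈ C) ∧
      ∃ t', t' ∈ fib hfib x ∧ ∀ t ∈ fib hfib x₀, s ≤ |t' - t| := by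
    intro n
    have hmem : ball x₀ (1 / (n + 1)) ∩ C ∈ 𝓝[C] x₀ := by
      rw [Set.inter_comm]
      exact inter_mem_nhdsWithin _ (ball_mem_nhds _ (by positivity))
    obtain ⟨x, hxU, hx⟩ := (frequently_iff.mp hcon) hmem
    push_neg at hx
    obtain ⟨t', ht', hfar⟩ := hx
    exact ⟨x, hxU, t', ht', fun t ht => (hfar t ht)⟩
  choose x hxball t' ht'mem ht'far using hseq
  have hzY : ∀ n, (x n, t' n) ∈ Y := fun n => (mem_fib hfib).mp (ht'mem n)
  obtain ⟨b, -, φ, hφ, hbtend⟩ := tendsto_subseq_of_bounded hbdd hzY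
  have hx_tend : Tendsto (fun n => x (φ n)) atTop (𝓝 x₀) := by
    rw [tendsto_iff_dist_tendsto_zero]
    apply squeeze_zero (fun n => dist_nonneg)
      (fun n => le_of_lt (mem_ball.mp (hxball (φ n)).1))
    have : Tendsto (fun n : ℕ => 1 / ((n : ℝ) + 1)) atTop (𝓝 0) :=
      tendsto_one_div_add_atTop_nhds_zero_nat
    exact this.comp hφ.tendsto_atTop
  have hfst : Tendsto (fun n => (x (φ n), t' (φ n)).1) atTop (𝓝 b.1) :=
    (continuous_fst.tendsto b).comp hbtend
  have hb1 : b.1 = x₀ := tendsto_nhds_unique hfst hx_tend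
  have hsnd : Tendsto (fun n => t' (φ n)) atTop (𝓝 b.2) :=
    (continuous_snd.tendsto b).comp hbtend
  -- use closedness to get (x₀, b.2) ∈ Y
  have hb2Y : (x₀, b.2) ∈ Y := by
    have hw : Tendsto (fun n => ((⟨x (φ n), (hxball (φ n)).2⟩ : C), t' (φ n)))
        atTop (𝓝 ((⟨x₀, hx₀⟩ : C), b.2)) := by
      refine Tendsto.prodMk_nhds ?_ hsnd
      exact tendsto_subtype_rng.mpr hx_tend
    have := hclosed.mem_of_tendsto hw (Filter.Eventually.of_forall
      (fun n => show ((x (φ n) : Fin m → ℝ), t' (φ n)) ∈ Y from hzY (φ n)))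
    exact this
  have hb2fib : b.2 ∈ fib hfib x₀ := (mem_fib hfib).mpr hb2Y
  have : ∀ᶠ n in atTop, |t' (φ n) - b.2| < s := by
    have := (tendsto_iff_dist_tendsto_zero.mp hsnd)
    filter_upwards [Metric.tendsto_nhds.mp hsnd s hs] with n hn
    rwa [Real.dist_eq] at hn
  obtain ⟨n, hn⟩ := this.exists
  exact absurd hn (not_lt.mpr (ht'far (φ n) b.2 hb2fib))




/-- Claim B: near `x₀`, there is a fiber point near each fiber point of `x₀`. -/
lemma claimB (hsub : ∀ p ∈ Y, p.1 ∈ C)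
    (hloc : IsLocalHomeomorph (fun y : Y => (⟨(y : (Fin m → ℝ) × ℝ).1, hsub y.1 y.2⟩ : C)))
    {x₀ : Fin m → ℝ} (hx₀ : x₀ ∈ C) {t : ℝ} (ht : (x₀, t) ∈ Y) {s : ℝ} (hs : 0 < s) :
    ∀ᶠ x in 𝓝[C] x₀, ∃ t', (x, t') ∈ Y ∧ |t' - t| < s := by
  set y : Y := ⟨(x₀, t), ht⟩ with hy_def
  obtain ⟨pe, hy, hpe⟩ := hloc y
  have hpey : pe y = ⟨x₀, hx₀⟩ := by
    rw [← congrFun hpe y]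
  set T : Set C := pe.target ∩ pe.symm ⁻¹' (pe.source ∩ {z : Y | |(z : (Fin m → ℝ) × ℝ).2 - t| < s})
    with hT_def
  have hTopen : IsOpen T := by
    apply pe.isOpen_inter_preimage_symm
    apply pe.open_source.inter
    have : Continuous (fun z : Y => |(z : (Fin m → ℝ) × ℝ).2 - t|) :=
      ((continuous_snd.comp continuous_subtype_val).sub continuous_const).abs
    exact isOpen_lt this continuous_const
  have hc₀T : (⟨x₀, hx₀⟩ : C) ∈ T := by
    rw [hT_def]
    refine ⟨hpey ▸ pe.map_source hy, ?_⟩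
    have : pe.symm ⟨x₀, hx₀⟩ = y := by rw [← hpey, pe.left_inv hy]
    rw [Set.mem_preimage, this]
    exact ⟨hy, by simp [hy_def, hs]⟩
  obtain ⟨O, hOopen, hOeq⟩ := isOpen_induced_iff.mp hTopen
  have hx₀O : x₀ ∈ O := by
    have : (⟨x₀, hx₀⟩ : C) ∈ (Subtype.val ⁻¹' O : Set C) := hOeq ▸ hc₀T
    exact this
  filter_upwards [nhdsWithin_le_nhds (hOopen.mem_nhds hx₀O), self_mem_nhdsWithin] with x hxO hxC
  have hcT : (⟨x, hxC⟩ : C) ∈ T := by rw [← hOeq]; exact hxO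
  obtain ⟨hct, hcs⟩ := hcT
  set z : Y := pe.symm ⟨x, hxC⟩ with hz_def
  obtain ⟨hzsrc, hznear⟩ := hcs
  have hpez : pe z = ⟨x, hxC⟩ := pe.right_inv hct
  have hz1 : (z : (Fin m → ℝ) × ℝ).1 = x := by
    have := congrFun hpe z
    rw [← this] at hpez
    exact congrArg Subtype.val hpez
  refine ⟨(z : (Fin m → ℝ) × ℝ).2, ?_, hznear⟩
  rw [← hz1, Prod.mk.eta]
  exact z.2

/-- Claim C: local injectivity near a fiber point of `x₀`. -/
lemma claimCu (hsub : ∀ p ∈ Y, p.1 ∈ C)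
    (hloc : IsLocalHomeomorph (fun y : Y => (⟨(y : (Fin m → ℝ) × ℝ).1, hsub y.1 y.2⟩ : C)))
    {x₀ : Fin m → ℝ} (hx₀ : x₀ ∈ C) {t : ℝ} (ht : (x₀, t) ∈ Y) :
    ∃ ρ > 0, ∀ᶠ x in 𝓝[C] x₀, ∀ t' t'' : ℝ, (x, t') ∈ Y → (x, t'') ∈ Y →
      |t' - t| < ρ → |t'' - t| < ρ → t' = t'' := by
  set y : Y := ⟨(x₀, t), ht⟩ with hy_def
  obtain ⟨pe, hy, hpe⟩ := hloc y
  obtain ⟨O, hOopen, hOeq⟩ := isOpen_induced_iff.mp pe.open_source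
  have hyO : ((x₀, t) : (Fin m → ℝ) × ℝ) ∈ O := by
    have : y ∈ (Subtype.val ⁻¹' O : Set Y) := hOeq ▸ hy
    exact this
  obtain ⟨δ, hδpos, hδsub⟩ := Metric.isOpen_iff.mp hOopen _ hyO
  refine ⟨δ, hδpos, ?_⟩
  filter_upwards [nhdsWithin_le_nhds (Metric.ball_mem_nhds x₀ hδpos), self_mem_nhdsWithin]
    with x hxball hxC t' t'' ht' ht'' hnear' hnear''
  have hmem : ∀ u : ℝ, (x, u) ∈ Y → |u - t| < δ → ((x, u) : (Fin m → ℝ) × ℝ) ∈ O := by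
    intro u huY hu
    apply hδsub
    rw [Metric.mem_ball, Prod.dist_eq]
    exact max_lt hxball (by rwa [Real.dist_eq])
  have hz' : (⟨(x, t'), ht'⟩ : Y) ∈ pe.source := by
    rw [← hOeq]; exact hmem t' ht' hnear'
  have hz'' : (⟨(x, t''), ht''⟩ : Y) ∈ pe.source := by
    rw [← hOeq]; exact hmem t'' ht'' hnear''
  have heq : pe ⟨(x, t'), ht'⟩ = pe ⟨(x, t''), ht''⟩ := by
    rw [← congrFun hpe ⟨(x, t'), ht'⟩, ← congrFun hpe ⟨(x, t''), ht''⟩]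
  have := pe.injOn hz' hz'' heq
  exact congrArg Prod.snd (congrArg Subtype.val this)



lemma gap_lemma (F : Finset ℝ) : ∃ γ > 0, ∀ t₁ ∈ F, ∀ t₂ ∈ F, t₁ ≠ t₂ → γ ≤ |t₁ - t₂| := by
  classical
  set S : Finset ℝ := ((F ×ˢ F).filter (fun p => p.1 ≠ p.2)).image (fun p => |p.1 - p.2|)
    with hS_def
  by_cases hS : S.Nonempty
  · refine ⟨S.min' hS, ?_, ?_⟩
    · have hmem := S.min'_mem hS
      simp only [hS_def, Finset.mem_image, Finset.mem_filter, Finset.mem_product] at hmem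
      obtain ⟨⟨a, b⟩, ⟨-, hne⟩, heq⟩ := hmem
      rw [← heq]
      exact abs_pos.mpr (sub_ne_zero.mpr hne)
    · intro t₁ h₁ t₂ h₂ hne
      apply S.min'_le
      simp only [hS_def, Finset.mem_image, Finset.mem_filter, Finset.mem_product]
      exact ⟨(t₁, t₂), ⟨⟨h₁, h₂⟩, hne⟩, rfl⟩
  · refine ⟨1, one_pos, ?_⟩
    intro t₁ h₁ t₂ h₂ hne
    exact absurd ⟨|t₁ - t₂|, by
      simp only [hS_def, Finset.mem_image, Finset.mem_filter, Finset.mem_product]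
      exact ⟨(t₁, t₂), ⟨⟨h₁, h₂⟩, hne⟩, rfl⟩⟩ hS


lemma key (hsub : ∀ p ∈ Y, p.1 ∈ C)
    (hloc : IsLocalHomeomorph (fun y : Y => (⟨(y : (Fin m → ℝ) × ℝ).1, hsub y.1 y.2⟩ : C)))
    (hfib : ∀ x : Fin m → ℝ, {p ∈ Y | p.1 = x}.Finite)
    (hclosed : IsClosed {p : C × ℝ | ((p.1 : Fin m → ℝ), p.2) ∈ Y})
    (hbdd : Bornology.IsBounded Y)
    {x₀ : Fin m → ℝ} (hx₀ : x₀ ∈ C) {ε : ℝ} (hε : 0 < ε) :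
    ∃ r, 0 < r ∧ r ≤ ε ∧ ∀ᶠ x in 𝓝[C] x₀, ∃ g : Fin (fib hfib x₀).card → ℝ,
      StrictMono g ∧ (∀ i, |g i - (fib hfib x₀).orderEmbOfFin rfl i| < r) ∧
      (∀ t : ℝ, t ∈ fib hfib x ↔ ∃ i, g i = t) := by
  classical
  set F := fib hfib x₀ with hF_def
  set e := F.orderEmbOfFin rfl with he_def
  obtain ⟨γ, hγpos, hγ⟩ := gap_lemma F
  have hCu' : ∀ t, t ∈ F → ∃ ρ, 0 < ρ ∧ ∀ᶠ x in 𝓝[C] x₀, ∀ t' t'' : ℝ,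
      (x, t') ∈ Y → (x, t'') ∈ Y → |t' - t| < ρ → |t'' - t| < ρ → t' = t'' := by
    intro t ht
    obtain ⟨ρ, hρ, hev⟩ := claimCu hsub hloc hx₀ ((mem_fib hfib).mp ht)
    exact ⟨ρ, hρ, hev⟩
  choose! ρ hρpos hρev using hCu'
  set ρmin : ℝ := if h : F.Nonempty then F.inf' h ρ else 1 with hρmin_def
  have hρminpos : 0 < ρmin := by
    rw [hρmin_def]
    split_ifs with h
    · exact (Finset.lt_inf'_iff h).mpr (fun t ht => hρpos t ht)
    · exact one_pos
  have hρmin_le : ∀ t ∈ F, ρmin ≤ ρ t := by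
    intro t ht
    rw [hρmin_def, dif_pos ⟨t, ht⟩]
    exact Finset.inf'_le _ ht
  set r : ℝ := min ε (min (γ / 3) ρmin) with hr_def
  have hrpos : 0 < r := lt_min hε (lt_min (by linarith) hρminpos)
  have hrε : r ≤ ε := min_le_left _ _
  have hrγ : r ≤ γ / 3 := le_trans (min_le_right _ _) (min_le_left _ _)
  have hrρ : ∀ t ∈ F, r ≤ ρ t := fun t ht =>
    le_trans (le_trans (min_le_right _ _) (min_le_right _ _)) (hρmin_le t ht)
  refine ⟨r, hrpos, hrε, ?_⟩
  have hBall : ∀ᶠ x in 𝓝[C] x₀, ∀ t ∈ F, ∃ t', (x, t') ∈ Y ∧ |t' - t| < r :=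
    (eventually_all_finite F.finite_toSet).mpr
      (fun t ht => claimB hsub hloc hx₀ ((mem_fib hfib).mp ht) hrpos)
  have hCuall : ∀ᶠ x in 𝓝[C] x₀, ∀ t ∈ F, ∀ t' t'' : ℝ,
      (x, t') ∈ Y → (x, t'') ∈ Y → |t' - t| < ρ t → |t'' - t| < ρ t → t' = t'' :=
    (eventually_all_finite F.finite_toSet).mpr (fun t ht => hρev t ht)
  filter_upwards [claimA hfib hclosed hbdd hx₀ hrpos, hBall, hCuall] with x hA hB hCu
  choose g hgY hgnear using fun i : Fin F.card => hB (e i) (Finset.orderEmbOfFin_mem F rfl i)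
  have hemem : ∀ i : Fin F.card, (e i : ℝ) ∈ F := fun i => Finset.orderEmbOfFin_mem F rfl i
  refine ⟨g, ?_, fun i => hgnear i, ?_⟩
  · intro i j hij
    have hlt : e i < e j := (F.orderEmbOfFin rfl).strictMono hij
    have hgap : γ ≤ |(e i : ℝ) - e j| := hγ _ (hemem i) _ (hemem j) (ne_of_lt hlt)
    rw [abs_sub_comm, abs_of_nonneg (by linarith)] at hgap
    have h1 := abs_lt.mp (hgnear i)
    have h2 := abs_lt.mp (hgnear j)
    have : (3 : ℝ) * r ≤ γ := by linarith
    linarith [h1.1, h1.2, h2.1, h2.2]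
  · intro t
    constructor
    · intro ht
      obtain ⟨t₀, ht₀F, hnear⟩ := hA t ht
      have : t₀ ∈ Set.range e := by
        rw [he_def, Finset.range_orderEmbOfFin]
        exact ht₀F
      obtain ⟨i, hi⟩ := this
      refine ⟨i, ?_⟩
      have hgi : |g i - t₀| < ρ t₀ := lt_of_lt_of_le (hi ▸ hgnear i) (hrρ t₀ ht₀F)
      have hti : |t - t₀| < ρ t₀ := lt_of_lt_of_le hnear (hrρ t₀ ht₀F)
      exact hCu t₀ ht₀F (g i) t (hgY i) ((mem_fib hfib).mp ht) hgi hti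
    · rintro ⟨i, rfl⟩
      exact (mem_fib hfib).mpr (hgY i)


theorem stmt_11' (hC : IsConnected C) (hsub : ∀ p ∈ Y, p.1 ∈ C)
    (hloc : IsLocalHomeomorph (fun y : Y => (⟨(y : (Fin m → ℝ) × ℝ).1, hsub y.1 y.2⟩ : C)))
    (hfib : ∀ x : Fin m → ℝ, {p ∈ Y | p.1 = x}.Finite)
    (hclosed : IsClosed {p : C × ℝ | ((p.1 : Fin m → ℝ), p.2) ∈ Y})
    (hbdd : Bornology.IsBounded Y) :
    ∃ (q : ℕ) (s : Fin q → (Fin m → ℝ) → ℝ),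
      (∀ i, ContinuousOn (s i) C) ∧
      (∀ i j : Fin q, i < j → ∀ x ∈ C, s i x < s j x) ∧
      Y = ⋃ i : Fin q, {p : (Fin m → ℝ) × ℝ | p.1 ∈ C ∧ p.2 = s i p.1} := by
  classical
  obtain ⟨⟨base, hbase⟩, hpre⟩ := hC
  set q := (fib hfib base).card with hq_def
  -- local constancy of the fiber cardinality
  have loc : ∀ y ∈ C, ∃ O : Set (Fin m → ℝ), IsOpen O ∧ y ∈ O ∧
      ∀ x ∈ O ∩ C, (fib hfib x).card = (fib hfib y).card := by
    intro y hy
    obtain ⟨r, hrpos, -, hev⟩ := key hsub hloc hfib hclosed hbdd hy one_pos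
    rw [eventually_iff, mem_nhdsWithin] at hev
    obtain ⟨O, hOopen, hyO, hsub'⟩ := hev
    refine ⟨O, hOopen, hyO, ?_⟩
    intro x hx
    obtain ⟨g, hmono, -, hiff⟩ := hsub' ⟨hx.1, hx.2⟩
    have : fib hfib x = Finset.image g Finset.univ := by
      ext t
      simp only [Finset.mem_image, Finset.mem_univ, true_and]
      rw [hiff t]
    rw [this, Finset.card_image_of_injective _ hmono.injective, Finset.card_univ,
      Fintype.card_fin]
  choose! O hOopen hOmem hOcard using loc
  -- fiber cardinality is constant on C by connectedness
  have hconst : ∀ x ∈ C, (fib hfib x).card = q := by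
    set u := ⋃ (y : Fin m → ℝ) (_ : y ∈ C ∧ (fib hfib y).card = q), O y with hu_def
    set v := ⋃ (y : Fin m → ℝ) (_ : y ∈ C ∧ (fib hfib y).card ≠ q), O y with hv_def
    have huo : IsOpen u := isOpen_iUnion fun y => isOpen_iUnion fun h => hOopen y h.1
    have hvo : IsOpen v := isOpen_iUnion fun y => isOpen_iUnion fun h => hOopen y h.1
    have hcov : C ⊆ u ∪ v := by
      intro y hy
      by_cases h : (fib hfib y).card = q
      · exact Or.inl (mem_iUnion.mpr ⟨y, mem_iUnion.mpr ⟨⟨hy, h⟩, hOmem y hy⟩⟩)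
      · exact Or.inr (mem_iUnion.mpr ⟨y, mem_iUnion.mpr ⟨⟨hy, h⟩, hOmem y hy⟩⟩)
    have hdisj : ¬(C ∩ (u ∩ v)).Nonempty := by
      rintro ⟨x, hxC, hxu, hxv⟩
      rw [hu_def, mem_iUnion] at hxu
      rw [hv_def, mem_iUnion] at hxv
      obtain ⟨y, hy⟩ := hxu
      rw [mem_iUnion] at hy
      obtain ⟨⟨hyC, hyq⟩, hxO⟩ := hy
      obtain ⟨y', hy'⟩ := hxv
      rw [mem_iUnion] at hy'
      obtain ⟨⟨hy'C, hy'q⟩, hxO'⟩ := hy'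
      have h1 := hOcard y hyC x ⟨hxO, hxC⟩
      have h2 := hOcard y' hy'C x ⟨hxO', hxC⟩
      exact hy'q (by rw [← h2, h1, hyq])
    intro x hx
    by_contra hne
    have h1 : (C ∩ u).Nonempty :=
      ⟨base, hbase, mem_iUnion.mpr ⟨base, mem_iUnion.mpr ⟨⟨hbase, rfl⟩, hOmem base hbase⟩⟩⟩
    have h2 : (C ∩ v).Nonempty :=
      ⟨x, hx, mem_iUnion.mpr ⟨x, mem_iUnion.mpr ⟨⟨hx, hne⟩, hOmem x hx⟩⟩⟩
    exact hdisj (hpre u v huo hvo hcov h1 h2)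
  -- the sections
  set s : Fin q → (Fin m → ℝ) → ℝ := fun j x =>
    if h : (fib hfib x).card = q then (fib hfib x).orderEmbOfFin h j else 0 with hs_def
  have hs_eq : ∀ (j : Fin q) (x : Fin m → ℝ) (h : (fib hfib x).card = q),
      s j x = (fib hfib x).orderEmbOfFin h j := by
    intro j x h
    rw [hs_def]
    exact dif_pos h
  refine ⟨q, s, ?_, ?_, ?_⟩
  · -- continuity
    intro j x₀ hx₀
    have hcard₀ : (fib hfib x₀).card = q := hconst x₀ hx₀
    have : Tendsto (s j) (𝓝[C] x₀) (𝓝 (s j x₀)) := by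
      rw [Metric.tendsto_nhds]
      intro ε hε
      obtain ⟨r, hrpos, hrε, hev⟩ := key hsub hloc hfib hclosed hbdd hx₀ hε
      filter_upwards [hev, self_mem_nhdsWithin] with x hx hxC
      obtain ⟨g, hmono, hnear, hiff⟩ := hx
      have hcardx : (fib hfib x).card = q := hconst x hxC
      set g' : Fin q → ℝ := fun i => g (Fin.cast hcard₀.symm i) with hg'_def
      have hg'mono : StrictMono g' := by
        intro a b hab
        exact hmono hab
      have hg'mem : ∀ i : Fin q, g' i ∈ fib hfib x := by
        intro i
        exact (hiff _).mpr ⟨Fin.cast hcard₀.symm i, rfl⟩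
      have hsx : ∀ i : Fin q, g' i = (fib hfib x).orderEmbOfFin hcardx i := fun i =>
        congrFun (Finset.orderEmbOfFin_unique hcardx hg'mem hg'mono) i
      set e' : Fin q → ℝ := fun i => (fib hfib x₀).orderEmbOfFin rfl (Fin.cast hcard₀.symm i)
        with he'_def
      have he'mem : ∀ i : Fin q, e' i ∈ fib hfib x₀ := fun i =>
        Finset.orderEmbOfFin_mem _ rfl _
      have he'mono : StrictMono e' := by
        intro a b hab
        exact ((fib hfib x₀).orderEmbOfFin rfl).strictMono hab
      have hsx₀ : ∀ i : Fin q, e' i = (fib hfib x₀).orderEmbOfFin hcard₀ i := fun i =>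
        congrFun (Finset.orderEmbOfFin_unique hcard₀ he'mem he'mono) i
      rw [hs_eq j x hcardx, hs_eq j x₀ hcard₀, ← hsx j, ← hsx₀ j, Real.dist_eq]
      exact lt_of_lt_of_le (hnear (Fin.cast hcard₀.symm j)) hrε
    exact this
  · -- strict ordering
    intro i j hij x hx
    rw [hs_eq i x (hconst x hx), hs_eq j x (hconst x hx)]
    exact ((fib hfib x).orderEmbOfFin _).strictMono hij
  · -- the union decomposition
    ext ⟨x, t⟩
    constructor
    · intro hp
      have hxC : x ∈ C := hsub _ hp
      have htf : t ∈ fib hfib x := (mem_fib hfib).mpr hp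
      have : t ∈ Set.range ((fib hfib x).orderEmbOfFin (hconst x hxC)) := by
        rw [Finset.range_orderEmbOfFin]
        exact htf
      obtain ⟨j, hj⟩ := this
      rw [mem_iUnion]
      exact ⟨j, hxC, by rw [hs_eq j x (hconst x hxC), hj]⟩
    · intro hp
      rw [mem_iUnion] at hp
      obtain ⟨j, hxC, ht⟩ := hp
      have ht' : t = s j x := ht
      have : t ∈ fib hfib x := by
        rw [ht', hs_eq j x (hconst x hxC)]
        exact Finset.orderEmbOfFin_mem _ _ _
      exact (mem_fib hfib).mp this


end Stmt11Aux

/-- If `Y ⊆ C × ℝ` with `C ⊆ ℝⁿ⁻¹` connected, the projection `Y → C` is a local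
homeomorphism with finite fibers, and `Y` is closed in `C × ℝ` and bounded, then `Y`
is a finite disjoint union of graphs of continuous sections `s₁ < s₂ < ⋯ < s_q`. -/
theorem stmt_11 {m : ℕ} (C : Set (Fin m → ℝ)) (hC : IsConnected C)
    (Y : Set ((Fin m → ℝ) × ℝ)) (hsub : ∀ p ∈ Y, p.1 ∈ C)
    (hloc : IsLocalHomeomorph (fun y : Y => (⟨(y : (Fin m → ℝ) × ℝ).1, hsub y.1 y.2⟩ : C)))
    (hfib : ∀ x : Fin m → ℝ, {p ∈ Y | p.1 = x}.Finite)
    (hclosed : IsClosed {p : C × ℝ | ((p.1 : Fin m → ℝ), p.2) ∈ Y})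
    (hbdd : Bornology.IsBounded Y) :
    ∃ (q : ℕ) (s : Fin q → (Fin m → ℝ) → ℝ),
      (∀ i, ContinuousOn (s i) C) ∧
      (∀ i j : Fin q, i < j → ∀ x ∈ C, s i x < s j x) ∧
      Y = ⋃ i : Fin q, {p : (Fin m → ℝ) × ℝ | p.1 ∈ C ∧ p.2 = s i p.1} :=
  Stmt11Aux.stmt_11' hC hsub hloc hfib hclosed hbdd
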